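/- Let λ₁, …, λₙ be positive real numbers. Then (λ₁⋯λₙ)^(1/n) ≤ (1/n)·∑ᵢ λᵢ ≤ (λ₁⋯λₙ)·(∑ᵢ 1/λᵢ)^(n-1). -/
import Mathlib


/-- AM-GM type eigenvalue inequality: for positive reals λ₁,…,λₙ,
(λ₁⋯λₙ)^(1/n) ≤ (1/n)∑λᵢ ≤ (λ₁⋯λₙ)(∑ 1/λᵢ)^(n-1). -/
theorem eigenvalue_trace_det_inequality (n : ℕ) (hn : 1 ≤ n) (lam : Fin n → ℝ)
    (hpos : ∀ i, 0 < lam i) :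
    (∏ i, lam i) ^ ((1 : ℝ) / n) ≤ (1 / n : ℝ) * ∑ i, lam i ∧
    (1 / n : ℝ) * ∑ i, lam i ≤ (∏ i, lam i) * (∑ i, (lam i)⁻¹) ^ (n - 1) := by
  have hnn : ∀ i, (0:ℝ) ≤ lam i := fun i => (hpos i).le
  have hn0 : (0:ℝ) < n := by exact_mod_cast hn
  have hS : (0:ℝ) ≤ ∑ i, (lam i)⁻¹ :=
    Finset.sum_nonneg fun i _ => (inv_pos.mpr (hpos i)).le
  constructor
  · have hgm := Real.geom_mean_le_arith_mean_weighted Finset.univ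
      (fun _ => (1:ℝ)/n) lam (fun i _ => by positivity)
      (by simp [Finset.sum_const, Finset.card_univ]; field_simp)
      (fun i _ => hnn i)
    calc (∏ i, lam i) ^ ((1:ℝ)/n) = ∏ i, (lam i) ^ ((1:ℝ)/n) := by
          rw [← Real.finset_prod_rpow _ _ (fun i _ => hnn i)]
      _ ≤ ∑ i, ((1:ℝ)/n) * lam i := hgm
      _ = (1/n : ℝ) * ∑ i, lam i := by rw [Finset.mul_sum]
  · have key : ∀ i : Fin n, lam i ≤ (∏ j, lam j) * (∑ j, (lam j)⁻¹) ^ (n - 1) := by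
      intro i
      have hcard : (Finset.univ.erase i).card = n - 1 := by
        simp [Finset.card_erase_of_mem]
      have hprod : ∏ j, lam j = lam i * ∏ j ∈ Finset.univ.erase i, lam j :=
        (Finset.mul_prod_erase Finset.univ lam (Finset.mem_univ i)).symm
      have hinv : ∏ j ∈ Finset.univ.erase i, (lam j)⁻¹
          ≤ (∑ j, (lam j)⁻¹) ^ (n - 1) := by
        rw [← hcard, ← Finset.prod_const]
        refine Finset.prod_le_prod (fun j _ => (inv_pos.mpr (hpos j)).le) (fun j _ => ?_)
        exact Finset.single_le_sum (fun k _ => (inv_pos.mpr (hpos k)).le) (Finset.mem_univ j)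
      have hpp : (0:ℝ) < lam i * ∏ j ∈ Finset.univ.erase i, lam j := by
        apply mul_pos (hpos i)
        exact Finset.prod_pos fun j _ => hpos j
      calc lam i = (lam i * ∏ j ∈ Finset.univ.erase i, lam j)
            * ∏ j ∈ Finset.univ.erase i, (lam j)⁻¹ := by
              rw [mul_assoc, ← Finset.prod_mul_distrib]
              have h1 : ∀ j ∈ Finset.univ.erase i, lam j * (lam j)⁻¹ = 1 :=
                fun j _ => mul_inv_cancel₀ (hpos j).ne'
              rw [Finset.prod_congr rfl h1, Finset.prod_const_one, mul_one]
        _ ≤ (lam i * ∏ j ∈ Finset.univ.erase i, lam j) * (∑ j, (lam j)⁻¹) ^ (n - 1) :=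
              mul_le_mul_of_nonneg_left hinv hpp.le
        _ = (∏ j, lam j) * (∑ j, (lam j)⁻¹) ^ (n - 1) := by rw [← hprod]
    have hsum : ∑ i, lam i ≤ n * ((∏ j, lam j) * (∑ j, (lam j)⁻¹) ^ (n - 1)) := by
      calc ∑ i, lam i ≤ ∑ _i : Fin n, (∏ j, lam j) * (∑ j, (lam j)⁻¹) ^ (n - 1) :=
            Finset.sum_le_sum fun i _ => key i
        _ = n * ((∏ j, lam j) * (∑ j, (lam j)⁻¹) ^ (n - 1)) := by
            simp [Finset.sum_const, Finset.card_univ, nsmul_eq_mul]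
    rw [div_mul_eq_mul_div, one_mul, div_le_iff₀ hn0]
    linarith [hsum]
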